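/- An affine transformation A : F^d → F^d respects all three of congruence on simultaneity ≡_S, the relation Rest, and betweenness Bw if and only if A is a trivial Galilean similarity. (That is, the affine automorphisms of Newtonian spacetime ⟨F^d, ≡_S, Rest, Bw⟩ are exactly the trivial Galilean similarities.) -/

import Mathlib

namespace Spacetimes

open Finset

variable {F : Type*} [Field F] [LinearOrder F] [IsStrictOrderedRing F] {d : ℕ}

/-- The Euclidean scalar product on `Fin d → F`. -/
def euclProd (p q : Fin d → F) : F := ∑ i, p i * q i

/-- The Minkowski product on `Fin d → F`; index `0` is the time coordinate. -/
def minkProd [NeZero d] (p q : Fin d → F) : F :=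
  p 0 * q 0 - ∑ i ∈ Finset.univ.erase (0 : Fin d), p i * q i

/-- The squared distance function associated to a product `B`. -/
def sqDist (B : (Fin d → F) → (Fin d → F) → F) (p q : Fin d → F) : F :=
  B (p - q) (p - q)

/-- An affine transformation: a linear bijection composed with a translation. -/
def IsAffine (A : (Fin d → F) → (Fin d → F)) : Prop :=
  ∃ (L : (Fin d → F) ≃ₗ[F] (Fin d → F)) (t : Fin d → F), ∀ p, A p = L p + t

/-- A Euclidean similarity: an affine transformation scaling squared
Euclidean distances by a constant factor. -/
def EuclSim (A : (Fin d → F) → (Fin d → F)) : Prop :=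
  IsAffine A ∧ ∃ a : F, ∀ p q : Fin d → F,
    sqDist euclProd (A p) (A q) = a * sqDist euclProd p q

/-- A Poincaré similarity: an affine transformation scaling squared
Minkowski distances by a constant factor. -/
def PoiSim [NeZero d] (A : (Fin d → F) → (Fin d → F)) : Prop :=
  IsAffine A ∧ ∃ a : F, ∀ p q : Fin d → F,
    sqDist minkProd (A p) (A q) = a * sqDist minkProd p q

/-- A Galilean similarity. -/
def GalSim [NeZero d] (A : (Fin d → F) → (Fin d → F)) : Prop :=
  IsAffine A ∧ ∃ a : F, ∀ p q : Fin d → F, p 0 = q 0 →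
    A p 0 = A q 0 ∧ sqDist euclProd (A p) (A q) = a * sqDist euclProd p q

/-- A map respects a binary relation. -/
def Respects2 {α : Type*} (f : α → α) (R : α → α → Prop) : Prop :=
  ∀ p q, R p q ↔ R (f p) (f q)

/-- A map respects a ternary relation. -/
def Respects3 {α : Type*} (f : α → α) (R : α → α → α → Prop) : Prop :=
  ∀ p q r, R p q r ↔ R (f p) (f q) (f r)

/-- A map respects a 4-ary relation. -/
def Respects4 {α : Type*} (f : α → α) (R : α → α → α → α → Prop) : Prop :=
  ∀ p q r s, R p q r s ↔ R (f p) (f q) (f r) (f s)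

/-- Absolute simultaneity. -/
def SimRel [NeZero d] (p q : Fin d → F) : Prop := p 0 = q 0

/-- Being at rest (same spatial components). -/
def RestRel [NeZero d] (p q : Fin d → F) : Prop := ∀ i, i ≠ 0 → p i = q i

/-- A trivial Euclidean similarity: a Euclidean similarity respecting `RestRel`. -/
def TrivEuclSim [NeZero d] (A : (Fin d → F) → (Fin d → F)) : Prop :=
  EuclSim A ∧ Respects2 A RestRel

/-- A trivial Galilean similarity: a Galilean similarity respecting `RestRel`. -/
def TrivGalSim [NeZero d] (A : (Fin d → F) → (Fin d → F)) : Prop :=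
  GalSim A ∧ Respects2 A RestRel

/-- Betweenness. -/
def Bw (p q r : Fin d → F) : Prop :=
  ∃ l : F, 0 ≤ l ∧ l ≤ 1 ∧ q = p + l • (r - p)

/-- Lightlike relatedness. -/
def Light [NeZero d] (p q : Fin d → F) : Prop :=
  (p 0 - q 0) ^ 2 = ∑ i ∈ Finset.univ.erase (0 : Fin d), (p i - q i) ^ 2

/-- Euclidean congruence of segments. -/
def CongE (p q r s : Fin d → F) : Prop :=
  sqDist euclProd p q = sqDist euclProd r s

/-- Minkowski congruence of segments. -/
def CongM [NeZero d] (p q r s : Fin d → F) : Prop :=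
  sqDist minkProd p q = sqDist minkProd r s

/-- Congruence on simultaneity. -/
def CongS [NeZero d] (p q r s : Fin d → F) : Prop :=
  CongE p q r s ∧ SimRel p q ∧ SimRel r s

/-- The time axis. -/
def timeAxis (F : Type*) [Field F] [LinearOrder F] [IsStrictOrderedRing F] (d : ℕ) [NeZero d] :
    Set (Fin d → F) := {p | ∀ i, i ≠ 0 → p i = 0}

/-- The simultaneity at the origin. -/
def simul0 (F : Type*) [Field F] [LinearOrder F] [IsStrictOrderedRing F] (d : ℕ) [NeZero d] :
    Set (Fin d → F) := {p | p 0 = 0}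

/-- The `i`-th standard unit vector. -/
def unitVec (F : Type*) [Field F] [LinearOrder F] [IsStrictOrderedRing F] {d : ℕ} (i : Fin d) : Fin d → F :=
  Pi.single i 1

section Helpers

variable {F : Type*} [Field F] [LinearOrder F] [IsStrictOrderedRing F] {d : ℕ}

lemma euclProd_comm (p q : Fin d → F) : euclProd p q = euclProd q p := by
  simp [euclProd, mul_comm]

lemma euclProd_self_nonneg (v : Fin d → F) : 0 ≤ euclProd v v :=
  Finset.sum_nonneg fun i _ => mul_self_nonneg _

lemma euclProd_self_eq_zero {v : Fin d → F} (h : euclProd v v = 0) : v = 0 := by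
  funext k
  have h2 : ∀ i ∈ (Finset.univ : Finset (Fin d)), 0 ≤ v i * v i :=
    fun i _ => mul_self_nonneg _
  have := (Finset.sum_eq_zero_iff_of_nonneg h2).mp h k (Finset.mem_univ k)
  simpa [mul_self_eq_zero] using this

lemma euclProd_add_add (u w : Fin d → F) :
    euclProd (u + w) (u + w) =
      euclProd u u + 2 * euclProd u w + euclProd w w := by
  simp only [euclProd, Pi.add_apply, Finset.mul_sum, ← Finset.sum_add_distrib]
  exact Finset.sum_congr rfl fun k _ => by ring

lemma euclProd_sub_sub (u w : Fin d → F) :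
    euclProd (u - w) (u - w) =
      euclProd u u - 2 * euclProd u w + euclProd w w := by
  simp only [euclProd, Pi.sub_apply, Finset.mul_sum, ← Finset.sum_add_distrib,
    ← Finset.sum_sub_distrib]
  exact Finset.sum_congr rfl fun k _ => by ring

lemma euclProd_single_single (i j : Fin d) :
    euclProd (unitVec F i) (unitVec F j) = if i = j then 1 else 0 := by
  classical
  simp only [euclProd, unitVec, Pi.single_apply]
  by_cases h : i = j
  · subst h
    simp
  · rw [if_neg h]
    apply Finset.sum_eq_zero
    intro k _
    by_cases hk : k = i
    · simp [hk, h]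
    · simp [hk]

lemma unitVec_apply_zero [NeZero d] {i : Fin d} (hi : i ≠ 0) :
    unitVec F i 0 = 0 := by
  simp [unitVec, Pi.single_apply, Ne.symm hi]

lemma decomp [NeZero d] {v : Fin d → F} (hv : v 0 = 0) :
    v = ∑ i ∈ Finset.univ.erase (0 : Fin d), v i • unitVec F i := by
  classical
  funext k
  rw [Finset.sum_apply]
  simp only [Pi.smul_apply, unitVec, Pi.single_apply, smul_eq_mul, mul_ite, mul_one, mul_zero]
  rw [Finset.sum_ite_eq (Finset.univ.erase (0 : Fin d)) k v]
  by_cases hk : k = 0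
  · simp [hk, hv]
  · simp [Finset.mem_erase, hk]

lemma euclProd_sum_left {ι : Type*} (s : Finset ι) (f : ι → Fin d → F) (w : Fin d → F) :
    euclProd (∑ i ∈ s, f i) w = ∑ i ∈ s, euclProd (f i) w := by
  simp only [euclProd, Finset.sum_apply, Finset.sum_mul]
  exact Finset.sum_comm

lemma euclProd_smul_left (c : F) (u w : Fin d → F) :
    euclProd (c • u) w = c * euclProd u w := by
  simp [euclProd, Finset.mul_sum, mul_assoc]

end Helpers
section Helpers2

variable {F : Type*} [Field F] [LinearOrder F] [IsStrictOrderedRing F] {d : ℕ}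

lemma euclProd_smul_right (c : F) (u w : Fin d → F) :
    euclProd u (c • w) = c * euclProd u w := by
  rw [euclProd_comm, euclProd_smul_left, euclProd_comm]

lemma key_scale [NeZero d] (hd : 2 ≤ d) (L : (Fin d → F) ≃ₗ[F] (Fin d → F))
    (hQ : ∀ u v : Fin d → F, u 0 = 0 → v 0 = 0 →
      euclProd u u = euclProd v v → euclProd (L u) (L u) = euclProd (L v) (L v)) :
    ∃ a : F, ∀ v : Fin d → F, v 0 = 0 →
      euclProd (L v) (L v) = a * euclProd v v := by
  classical
  have h1d : (1 : ℕ) < d := by omega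
  set i1 : Fin d := ⟨1, h1d⟩ with hi1
  have hi1ne : i1 ≠ 0 := by
    intro h
    have := congrArg Fin.val h
    simp [hi1] at this
  set a := euclProd (L (unitVec F i1)) (L (unitVec F i1)) with ha
  refine ⟨a, ?_⟩
  set s := Finset.univ.erase (0 : Fin d) with hs
  have hQe : ∀ i : Fin d, euclProd (unitVec F i) (unitVec F i) = 1 := by
    intro i; rw [euclProd_single_single, if_pos rfl]
  have hU0 : ∀ i ∈ s, unitVec F i 0 = 0 := fun i hi =>
    unitVec_apply_zero (Finset.mem_erase.mp hi).1
  have hi1s : i1 ∈ s := Finset.mem_erase.mpr ⟨hi1ne, Finset.mem_univ _⟩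
  have hdiag : ∀ i ∈ s, euclProd (L (unitVec F i)) (L (unitVec F i)) = a := by
    intro i hi
    exact hQ _ _ (hU0 i hi) (hU0 i1 hi1s) (by rw [hQe, hQe])
  have hoff : ∀ i ∈ s, ∀ j ∈ s, i ≠ j →
      euclProd (L (unitVec F i)) (L (unitVec F j)) = 0 := by
    intro i hi j hj hij
    have hsum0 : (unitVec F i + unitVec F j) 0 = 0 := by
      simp [Pi.add_apply, hU0 i hi, hU0 j hj]
    have hsub0 : (unitVec F i - unitVec F j) 0 = 0 := by
      simp [Pi.sub_apply, hU0 i hi, hU0 j hj]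
    have hb : euclProd (unitVec F i) (unitVec F j) = 0 := by
      rw [euclProd_single_single, if_neg hij]
    have hqeq : euclProd (unitVec F i + unitVec F j) (unitVec F i + unitVec F j)
        = euclProd (unitVec F i - unitVec F j) (unitVec F i - unitVec F j) := by
      rw [euclProd_add_add, euclProd_sub_sub, hb]; ring
    have hkey := hQ _ _ hsum0 hsub0 hqeq
    rw [map_add, map_sub, euclProd_add_add, euclProd_sub_sub] at hkey
    linarith
  intro v hv
  have hdec := decomp hv
  have hLv : L v = ∑ i ∈ s, v i • L (unitVec F i) := by
    conv_lhs => rw [hdec]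
    rw [map_sum]
    exact Finset.sum_congr rfl fun i _ => by rw [map_smul]
  have hQv : euclProd v v = ∑ i ∈ s, v i * v i := by
    rw [euclProd, ← Finset.add_sum_erase Finset.univ (fun k => v k * v k)
      (Finset.mem_univ (0 : Fin d)), hv, zero_mul, zero_add]
  calc euclProd (L v) (L v)
      = ∑ i ∈ s, v i * (∑ j ∈ s, v j * euclProd (L (unitVec F i)) (L (unitVec F j))) := by
        rw [hLv, euclProd_sum_left]
        refine Finset.sum_congr rfl fun i _ => ?_
        rw [euclProd_smul_left, euclProd_comm, euclProd_sum_left]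
        congr 1
        refine Finset.sum_congr rfl fun j _ => ?_
        rw [euclProd_smul_left, euclProd_comm]
    _ = ∑ i ∈ s, v i * (v i * a) := by
        refine Finset.sum_congr rfl fun i hi => ?_
        congr 1
        rw [Finset.sum_eq_single i]
        · rw [hdiag i hi]
        · intro j hj hji
          rw [hoff i hi j hj (Ne.symm hji), mul_zero]
        · intro h; exact absurd hi h
    _ = a * euclProd v v := by
        rw [hQv, Finset.mul_sum]
        exact Finset.sum_congr rfl fun i _ => by ring

lemma ker_proj_invariant [NeZero d] (L : (Fin d → F) ≃ₗ[F] (Fin d → F))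
    (h : ∀ v : Fin d → F, v 0 = 0 → (L v) 0 = 0) :
    ∀ v : Fin d → F, (L v) 0 = 0 → v 0 = 0 := by
  classical
  set P : (Fin d → F) →ₗ[F] F := LinearMap.proj 0 with hP
  set H : Submodule F (Fin d → F) := LinearMap.ker P with hH
  have hmem : ∀ v : Fin d → F, v ∈ H ↔ v 0 = 0 := by
    intro v; simp [hH, hP, LinearMap.mem_ker]
  have hmaps : ∀ v ∈ H, (L : (Fin d → F) →ₗ[F] (Fin d → F)) v ∈ H := by
    intro v hv
    rw [hmem] at hv ⊢
    exact h v hv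
  set φ := ((L : (Fin d → F) →ₗ[F] (Fin d → F)).restrict hmaps) with hφ
  have hφval : ∀ x : H, ((φ x : H) : Fin d → F) = L (x : Fin d → F) := by
    intro x; rfl
  have hinj : Function.Injective φ := by
    intro x y hxy
    apply Subtype.ext
    apply L.injective
    rw [← hφval, ← hφval, hxy]
  have hsurj : Function.Surjective φ := LinearMap.injective_iff_surjective.mp hinj
  intro v hv
  obtain ⟨u, hu⟩ := hsurj ⟨L v, (hmem _).mpr hv⟩
  have huval : L (u : Fin d → F) = L v := by
    rw [← hφval, hu]
  have huv : (u : Fin d → F) = v := L.injective huval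
  rw [← hmem, ← huv]
  exact u.2

lemma isAffine_respects_bw {A : (Fin d → F) → (Fin d → F)} (hA : IsAffine A) :
    Respects3 A Bw := by
  obtain ⟨L, t, h⟩ := hA
  have hkey : ∀ (l : F) (p r : Fin d → F),
      A (p + l • (r - p)) = A p + l • (A r - A p) := by
    intro l p r
    simp only [h, map_add, map_smul, map_sub]
    module
  have hinjA : Function.Injective A := by
    intro x y hxy
    apply L.injective
    have h2 : L x + t = L y + t := by rw [← h, ← h, hxy]
    exact add_right_cancel h2
  intro p q r
  constructor
  · rintro ⟨l, h0, h1, rfl⟩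
    exact ⟨l, h0, h1, hkey l p r⟩
  · rintro ⟨l, h0, h1, hq⟩
    refine ⟨l, h0, h1, hinjA ?_⟩
    rw [hq, hkey]

end Helpers2
/-- the affine automorphisms of Newtonian spacetime
`⟨F^d, ≡_S, Rest, Bw⟩` are exactly the trivial Galilean similarities. -/
theorem affAut_newt_eq_trivGalSim [NeZero d] (hd : 2 ≤ d)
    (A : (Fin d → F) → (Fin d → F)) (hA : IsAffine A) :
    (Respects4 A CongS ∧ Respects2 A RestRel ∧ Respects3 A Bw) ↔
      TrivGalSim A := by
  obtain ⟨L, t, hL⟩ := hA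
  have hAB : ∀ p q : Fin d → F, A p - A q = L (p - q) := by
    intro p q
    rw [hL, hL, map_sub]
    abel
  constructor
  · rintro ⟨hC, hR, _⟩
    have hsim : ∀ p q : Fin d → F, SimRel p q ↔ SimRel (A p) (A q) := by
      intro p q
      constructor
      · intro hpq; exact ((hC p q p q).mp ⟨rfl, hpq, hpq⟩).2.1
      · intro hpq; exact ((hC p q p q).mpr ⟨rfl, hpq, hpq⟩).2.1
    have hQkey : ∀ u v : Fin d → F, u 0 = 0 → v 0 = 0 →
        euclProd u u = euclProd v v → euclProd (L u) (L u) = euclProd (L v) (L v) := by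
      intro u v hu hv he
      have h1 : CongS u 0 v 0 :=
        ⟨by simpa [CongE, sqDist] using he, by simpa [SimRel] using hu,
          by simpa [SimRel] using hv⟩
      have h2 := ((hC u 0 v 0).mp h1).1
      simp only [CongE, sqDist] at h2
      rwa [hAB u 0, hAB v 0, sub_zero, sub_zero] at h2
    obtain ⟨a, hscale⟩ := key_scale hd L hQkey
    refine ⟨⟨⟨L, t, hL⟩, a, ?_⟩, hR⟩
    intro p q hpq
    refine ⟨(hsim p q).mp hpq, ?_⟩
    have hv : (p - q) 0 = 0 := by simp [Pi.sub_apply, hpq]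
    have := hscale (p - q) hv
    simp only [sqDist]
    rwa [hAB p q]
  · rintro ⟨⟨-, a, hGal⟩, hR⟩
    refine ⟨?_, hR, isAffine_respects_bw ⟨L, t, hL⟩⟩
    have hL0 : ∀ v : Fin d → F, v 0 = 0 → (L v) 0 = 0 := by
      intro v hv
      have := (hGal v 0 (by simpa using hv)).1
      simp only [hL, map_zero, Pi.add_apply, Pi.zero_apply, zero_add] at this
      linarith
    have hrev := ker_proj_invariant L hL0
    have hscale : ∀ v : Fin d → F, v 0 = 0 →
        euclProd (L v) (L v) = a * euclProd v v := by
      intro v hv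
      have h2 := (hGal v 0 (by simpa using hv)).2
      simp only [sqDist] at h2
      rwa [hAB v 0, sub_zero] at h2
    have ha : a ≠ 0 := by
      intro h0
      have h1d : (1 : ℕ) < d := by omega
      have he0 : unitVec F (⟨1, h1d⟩ : Fin d) 0 = 0 := by
        apply unitVec_apply_zero
        intro h
        have := congrArg Fin.val h
        simp at this
      have h2 := hscale _ he0
      rw [h0, zero_mul] at h2
      have hLe := euclProd_self_eq_zero h2
      have he : unitVec F (⟨1, h1d⟩ : Fin d) = 0 := by
        apply L.injective
        rw [hLe, map_zero]
      have := congrFun he ⟨1, h1d⟩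
      simp [unitVec, Pi.single_apply] at this
    intro p q r s
    have hsub : ∀ x y : Fin d → F, x 0 = y 0 → (x - y) 0 = 0 := by
      intro x y h; simp [Pi.sub_apply, h]
    constructor
    · rintro ⟨hE, h1, h2⟩
      refine ⟨?_, (hGal p q h1).1, (hGal r s h2).1⟩
      simp only [CongE, sqDist] at hE ⊢
      rw [hAB p q, hAB r s, hscale _ (hsub p q h1), hscale _ (hsub r s h2), hE]
    · rintro ⟨hE, h1, h2⟩
      have hpq0 : (L (p - q)) 0 = 0 := by
        rw [← hAB p q]
        simp [Pi.sub_apply, sub_eq_zero]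
        exact h1
      have hrs0 : (L (r - s)) 0 = 0 := by
        rw [← hAB r s]
        simp [Pi.sub_apply, sub_eq_zero]
        exact h2
      have hp : (p - q) 0 = 0 := hrev _ hpq0
      have hr : (r - s) 0 = 0 := hrev _ hrs0
      have hp' : SimRel p q := by
        have := hp
        simp only [Pi.sub_apply, sub_eq_zero] at this
        exact this
      have hr' : SimRel r s := by
        have := hr
        simp only [Pi.sub_apply, sub_eq_zero] at this
        exact this
      refine ⟨?_, hp', hr'⟩
      simp only [CongE, sqDist] at hE ⊢
      rw [hAB p q, hAB r s, hscale _ hp, hscale _ hr] at hE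
      exact mul_left_cancel₀ ha hE

end Spacetimes
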